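/- Let a, b : V × V → ℝ with a a symmetric positive definite bilinear form on a finite-dimensional space V and b : V × Q → ℝ a bilinear form on finite-dimensional spaces satisfying the inf-sup condition: there is β > 0 such that for every q ∈ Q, sup_{v ≠ 0} b(v,q)/‖v‖ ≥ β‖q‖. Then the saddle-point problem a(u,v) + b(v,p) = G(v) for all v, b(u,q) = F(q) for all q, has a unique solution (u,p) ∈ V × Q for every pair of linear functionals G, F. -/

import Mathlib

/-- Finite-dimensional Brezzi theory: the saddle-point problem has a unique
solution when a is symmetric coercive and b satisfies the inf-sup condition. -/
theorem brezzi_wellposed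
    {V Q : Type*}
    [NormedAddCommGroup V] [NormedSpace ℝ V] [FiniteDimensional ℝ V]
    [NormedAddCommGroup Q] [NormedSpace ℝ Q] [FiniteDimensional ℝ Q]
    (a : V →ₗ[ℝ] V →ₗ[ℝ] ℝ) (b : V →ₗ[ℝ] Q →ₗ[ℝ] ℝ)
    (hasymm : ∀ u v, a u v = a v u)
    (hacoer : ∃ α : ℝ, 0 < α ∧ ∀ v, α * ‖v‖ ^ 2 ≤ a v v)
    (hinfsup : ∃ β : ℝ, 0 < β ∧ ∀ q : Q, ∃ v : V, v ≠ 0 ∧ β * ‖v‖ * ‖q‖ ≤ b v q)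
    (G : V →ₗ[ℝ] ℝ) (F : Q →ₗ[ℝ] ℝ) :
    ∃! up : V × Q, (∀ v, a up.1 v + b v up.2 = G v) ∧ (∀ q, b up.1 q = F q) := by
  obtain ⟨α, hα, hcoer⟩ := hacoer
  obtain ⟨β, hβ, hsup⟩ := hinfsup
  -- the saddle point operator
  set T : (V × Q) →ₗ[ℝ] (Module.Dual ℝ V × Module.Dual ℝ Q) :=
    LinearMap.prod
      (a.comp (LinearMap.fst ℝ V Q) + b.flip.comp (LinearMap.snd ℝ V Q))
      (b.comp (LinearMap.fst ℝ V Q)) with hT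
  have hinj : Function.Injective T := by
    rw [← LinearMap.ker_eq_bot, LinearMap.ker_eq_bot']
    rintro ⟨u, p⟩ hup
    simp only [hT, LinearMap.prod_apply, Prod.mk_eq_zero, Function.prod] at hup
    obtain ⟨h1, h2⟩ := hup
    have h1' : ∀ v : V, a u v + b v p = 0 := fun v => by simpa using LinearMap.congr_fun h1 v
    have h2' : ∀ q : Q, b u q = 0 := fun q => by simpa using LinearMap.congr_fun h2 q
    have hu : u = 0 := by
      have := h1' u
      rw [show b u p = 0 from h2' p, add_zero] at this
      by_contra hne
      have hn : (0:ℝ) < ‖u‖ := norm_pos_iff.mpr hne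
      have := hcoer u
      nlinarith [mul_pos hα (pow_pos hn 2)]
    have hp : p = 0 := by
      obtain ⟨v, hv, hle⟩ := hsup p
      have : b v p = 0 := by
        have := h1' v; rw [hu] at this; simpa using this
      rw [this] at hle
      have hn : (0:ℝ) < ‖v‖ := norm_pos_iff.mpr hv
      have hβv : (0:ℝ) < β * ‖v‖ := mul_pos hβ hn
      have h' : (β * ‖v‖) * ‖p‖ ≤ (β * ‖v‖) * 0 := by
        rw [mul_zero]; exact hle
      exact norm_le_zero_iff.mp (le_of_mul_le_mul_left h' hβv)
    simp [hu, hp]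
  have hdim : Module.finrank ℝ (V × Q)
      = Module.finrank ℝ (Module.Dual ℝ V × Module.Dual ℝ Q) := by
    simp [Module.finrank_prod, Subspace.dual_finrank_eq]
  have hsurj : Function.Surjective T :=
    (LinearMap.injective_iff_surjective_of_finrank_eq_finrank hdim).mp hinj
  obtain ⟨up, hup⟩ := hsurj (G, F)
  have key : ∀ w : V × Q,
      ((∀ v, a w.1 v + b v w.2 = G v) ∧ (∀ q, b w.1 q = F q)) ↔ T w = (G, F) := by
    intro w
    constructor
    · rintro ⟨h1, h2⟩
      simp only [hT, LinearMap.prod_apply, Function.prod, Prod.mk.injEq]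
      constructor
      · ext v; simpa using h1 v
      · ext q; exact h2 q
    · intro h
      simp only [hT, LinearMap.prod_apply, Function.prod, Prod.mk.injEq] at h
      obtain ⟨h1, h2⟩ := h
      exact ⟨fun v => by simpa using LinearMap.congr_fun h1 v,
        fun q => by simpa using LinearMap.congr_fun h2 q⟩
  refine ⟨up, (key up).mpr hup, fun w hw => hinj ?_⟩
  rw [(key w).mp hw, hup]
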